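/- For ⋈ ∈ {∼, ≈} (strong, resp. weak bisimilarity of Petri calculus terms): (i) if P : (k,l), Q : (l,m), R : (m,n) then (P;Q);R ⋈ P;(Q;R); (ii) if P : (k,l), Q : (m,n), R : (t,u) then (P⊗Q)⊗R ⋈ P⊗(Q⊗R); (iii) if P : (k,l), Q : (l,m), R : (n,t), S : (t,u) then (P;Q)⊗(R;S) ⋈ (P⊗R);(Q⊗S). -/

import Mathlib

/-- Syntax of the Petri calculus. -/
inductive PTerm : Type
  | empty               -- ○ (empty one-place buffer)
  | full                -- ● (full one-place buffer)
  | iden                -- I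
  | tw                  -- X
  | diag                -- Δ
  | codiag              -- ∇
  | bot                 -- ⊥
  | top                 -- ⊤
  | lam                 -- Λ
  | vee                 -- V
  | down                -- ↓
  | up                  -- ↑
  | tens (P Q : PTerm)  -- ⊗
  | seq (P Q : PTerm)   -- ;
  deriving DecidableEq

namespace PTerm

/-- Sorting discipline of the Petri calculus. -/
inductive HasSort : PTerm → ℕ → ℕ → Prop
  | empty : HasSort .empty 1 1
  | full : HasSort .full 1 1
  | iden : HasSort .iden 1 1
  | tw : HasSort .tw 2 2
  | diag : HasSort .diag 1 2
  | codiag : HasSort .codiag 2 1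
  | bot : HasSort .bot 1 0
  | top : HasSort .top 0 1
  | lam : HasSort .lam 1 2
  | vee : HasSort .vee 2 1
  | down : HasSort .down 1 0
  | up : HasSort .up 0 1
  | tens {P Q : PTerm} {k l m n : ℕ} :
      HasSort P k l → HasSort Q m n → HasSort (.tens P Q) (k + m) (l + n)
  | seq {P Q : PTerm} {k n l : ℕ} :
      HasSort P k n → HasSort Q n l → HasSort (.seq P Q) k l

/-- Basic connectors are the constants of the calculus. -/
def IsBasic : PTerm → Prop
  | .tens _ _ => False
  | .seq _ _ => False
  | _ => True

/-- Stateless terms contain no buffers ○, ●. -/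
def Stateless : PTerm → Prop
  | .empty => False
  | .full => False
  | .tens P Q => Stateless P ∧ Stateless Q
  | .seq P Q => Stateless P ∧ Stateless Q
  | _ => True

/-- Strong operational semantics of the Petri calculus.  Labels are words
over ℕ (the rules only produce entries in {0,1}). -/
inductive Step : PTerm → List ℕ → List ℕ → PTerm → Prop
  | tkI : Step .empty [1] [0] .full
  | tkO : Step .full [0] [1] .empty
  | iden : Step .iden [1] [1] .iden
  | tw {a b : ℕ} : a ≤ 1 → b ≤ 1 → Step .tw [a, b] [b, a] .tw
  | bot : Step .bot [1] [] .bot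
  | top : Step .top [] [1] .top
  | diag : Step .diag [1] [1, 1] .diag
  | codiag : Step .codiag [1, 1] [1] .codiag
  | lam {a : ℕ} : a ≤ 1 → Step .lam [1] [1 - a, a] .lam
  | vee {a : ℕ} : a ≤ 1 → Step .vee [1 - a, a] [1] .vee
  | refl {C : PTerm} {k l : ℕ} : IsBasic C → HasSort C k l →
      Step C (List.replicate k 0) (List.replicate l 0) C
  | cut {P Q R S : PTerm} {α β γ : List ℕ} :
      Step P α γ Q → Step R γ β S → Step (.seq P R) α β (.seq Q S)
  | ten {P Q R S : PTerm} {α₁ α₂ β₁ β₂ : List ℕ} :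
      Step P α₁ β₁ Q → Step R α₂ β₂ S →
      Step (.tens P R) (α₁ ++ α₂) (β₁ ++ β₂) (.tens Q S)

/-- Weak operational semantics of the Petri calculus: the same rules plus the
rule (Weak) composing consecutive steps by pointwise addition of labels. -/
inductive Weak : PTerm → List ℕ → List ℕ → PTerm → Prop
  | tkI : Weak .empty [1] [0] .full
  | tkO : Weak .full [0] [1] .empty
  | iden : Weak .iden [1] [1] .iden
  | tw {a b : ℕ} : a ≤ 1 → b ≤ 1 → Weak .tw [a, b] [b, a] .tw
  | bot : Weak .bot [1] [] .bot
  | top : Weak .top [] [1] .top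
  | diag : Weak .diag [1] [1, 1] .diag
  | codiag : Weak .codiag [1, 1] [1] .codiag
  | lam {a : ℕ} : a ≤ 1 → Weak .lam [1] [1 - a, a] .lam
  | vee {a : ℕ} : a ≤ 1 → Weak .vee [1 - a, a] [1] .vee
  | refl {C : PTerm} {k l : ℕ} : IsBasic C → HasSort C k l →
      Weak C (List.replicate k 0) (List.replicate l 0) C
  | cut {P Q R S : PTerm} {α β γ : List ℕ} :
      Weak P α γ Q → Weak R γ β S → Weak (.seq P R) α β (.seq Q S)
  | ten {P Q R S : PTerm} {α₁ α₂ β₁ β₂ : List ℕ} :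
      Weak P α₁ β₁ Q → Weak R α₂ β₂ S →
      Weak (.tens P R) (α₁ ++ α₂) (β₁ ++ β₂) (.tens Q S)
  | weak {P R Q : PTerm} {α₁ α₂ β₁ β₂ : List ℕ} :
      Weak P α₁ β₁ R → Weak R α₂ β₂ Q →
      Weak P (List.zipWith (· + ·) α₁ α₂) (List.zipWith (· + ·) β₁ β₂) Q

end PTerm
/-- A bisimulation for a two-labelled transition system. -/
def IsBisimulation {S : Type*} {L : Type*} (tr : S → L → S → Prop)
    (R : S → S → Prop) : Prop :=
  ∀ p q, R p q →
    (∀ a p', tr p a p' → ∃ q', tr q a q' ∧ R p' q') ∧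
    (∀ a q', tr q a q' → ∃ p', tr p a p' ∧ R p' q')

/-- Bisimilarity: two states are bisimilar when some bisimulation relates them. -/
def Bisimilar {S : Type*} {L : Type*} (tr : S → L → S → Prop) (p q : S) : Prop :=
  ∃ R, IsBisimulation tr R ∧ R p q
/-- Strong transition relation of the Petri calculus, packaged with paired labels. -/
def pcStrongTr : PTerm → List ℕ × List ℕ → PTerm → Prop :=
  fun P a Q => PTerm.Step P a.1 a.2 Q

/-- Weak transition relation of the Petri calculus, packaged with paired labels. -/
def pcWeakTr : PTerm → List ℕ × List ℕ → PTerm → Prop :=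
  fun P a Q => PTerm.Weak P a.1 a.2 Q

/-- Strong bisimilarity `∼` of Petri calculus terms. -/
def SBisim (P Q : PTerm) : Prop := Bisimilar pcStrongTr P Q

/-- Weak bisimilarity `≈` of Petri calculus terms. -/
def WBisim (P Q : PTerm) : Prop := Bisimilar pcWeakTr P Q

namespace PTerm

theorem sort_unique : ∀ {P : PTerm} {k l k' l' : ℕ}, HasSort P k l → HasSort P k' l' →
    k = k' ∧ l = l' := by
  intro P k l k' l' h
  induction h generalizing k' l' with
  | tens h1 h2 ih1 ih2 =>
    intro h'
    cases h' with
    | tens a b =>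
      obtain ⟨e1, e2⟩ := ih1 a
      obtain ⟨e3, e4⟩ := ih2 b
      omega
  | seq h1 h2 ih1 ih2 =>
    intro h'
    cases h' with
    | seq a b =>
      obtain ⟨e1, e2⟩ := ih1 a
      subst e2
      exact ⟨e1, (ih2 b).2⟩
  | _ => intro h'; cases h'; exact ⟨rfl, rfl⟩

theorem Step.sort : ∀ {P : PTerm} {α β : List ℕ} {Q : PTerm}, Step P α β Q →
    ∀ {k l : ℕ}, HasSort P k l → α.length = k ∧ β.length = l ∧ HasSort Q k l := by
  intro P α β Q h
  induction h with
  | refl hb hs =>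
    intro k l hs'
    obtain ⟨e1, e2⟩ := sort_unique hs hs'
    subst e1; subst e2
    exact ⟨by simp, by simp, hs'⟩
  | cut h1 h2 ih1 ih2 =>
    intro k l hs
    cases hs with
    | seq a b =>
      obtain ⟨e1, e2, c1⟩ := ih1 a
      obtain ⟨e3, e4, c2⟩ := ih2 b
      exact ⟨e1, e4, .seq c1 c2⟩
  | ten h1 h2 ih1 ih2 =>
    intro k l hs
    cases hs with
    | tens a b =>
      obtain ⟨e1, e2, c1⟩ := ih1 a
      obtain ⟨e3, e4, c2⟩ := ih2 b
      refine ⟨?_, ?_, .tens c1 c2⟩ <;> simp [e1, e2, e3, e4]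
  | _ => intro k l hs; cases hs; exact ⟨rfl, rfl, by constructor⟩

theorem Weak.sort : ∀ {P : PTerm} {α β : List ℕ} {Q : PTerm}, Weak P α β Q →
    ∀ {k l : ℕ}, HasSort P k l → α.length = k ∧ β.length = l ∧ HasSort Q k l := by
  intro P α β Q h
  induction h with
  | refl hb hs =>
    intro k l hs'
    obtain ⟨e1, e2⟩ := sort_unique hs hs'
    subst e1; subst e2
    exact ⟨by simp, by simp, hs'⟩
  | cut h1 h2 ih1 ih2 =>
    intro k l hs
    cases hs with
    | seq a b =>
      obtain ⟨e1, e2, c1⟩ := ih1 a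
      obtain ⟨e3, e4, c2⟩ := ih2 b
      exact ⟨e1, e4, .seq c1 c2⟩
  | ten h1 h2 ih1 ih2 =>
    intro k l hs
    cases hs with
    | tens a b =>
      obtain ⟨e1, e2, c1⟩ := ih1 a
      obtain ⟨e3, e4, c2⟩ := ih2 b
      refine ⟨?_, ?_, .tens c1 c2⟩ <;> simp [e1, e2, e3, e4]
  | weak h1 h2 ih1 ih2 =>
    intro k l hs
    obtain ⟨e1, e2, c1⟩ := ih1 hs
    obtain ⟨e3, e4, c2⟩ := ih2 c1
    refine ⟨?_, ?_, c2⟩ <;> simp [e1, e2, e3, e4]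
  | _ => intro k l hs; cases hs; exact ⟨rfl, rfl, by constructor⟩

theorem Step.seq_inv {P R : PTerm} {α β : List ℕ} {T : PTerm}
    (h : Step (.seq P R) α β T) :
    ∃ Q S γ, T = .seq Q S ∧ Step P α γ Q ∧ Step R γ β S := by
  cases h with
  | refl hb _ => exact False.elim hb
  | cut h1 h2 => exact ⟨_, _, _, rfl, h1, h2⟩

theorem Step.tens_inv {P R : PTerm} {α β : List ℕ} {T : PTerm} {k l m n : ℕ}
    (h : Step (.tens P R) α β T) (hP : HasSort P k l) (hR : HasSort R m n) :
    ∃ Q S α₁ α₂ β₁ β₂, T = .tens Q S ∧ α = α₁ ++ α₂ ∧ β = β₁ ++ β₂ ∧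
      α₁.length = k ∧ β₁.length = l ∧ Step P α₁ β₁ Q ∧ Step R α₂ β₂ S := by
  cases h with
  | refl hb _ => exact False.elim hb
  | ten h1 h2 =>
    obtain ⟨e1, e2, _⟩ := h1.sort hP
    exact ⟨_, _, _, _, _, _, rfl, rfl, rfl, e1, e2, h1, h2⟩

theorem Weak.seq_inv' : ∀ {X : PTerm} {α β : List ℕ} {T : PTerm}, Weak X α β T →
    ∀ P R, X = .seq P R → ∃ Q S γ, T = .seq Q S ∧ Weak P α γ Q ∧ Weak R γ β S := by
  intro X α β T h
  induction h with
  | refl hb _ =>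
    intro P R he; subst he; exact False.elim hb
  | cut h1 h2 =>
    intro P R he
    injection he with e1 e2
    subst e1; subst e2
    exact ⟨_, _, _, rfl, h1, h2⟩
  | weak h1 h2 ih1 ih2 =>
    intro P R he
    obtain ⟨Q1, S1, γ1, rfl, w1, w2⟩ := ih1 P R he
    obtain ⟨Q2, S2, γ2, rfl, w3, w4⟩ := ih2 Q1 S1 rfl
    exact ⟨Q2, S2, _, rfl, .weak w1 w3, .weak w2 w4⟩
  | _ => intro P R he; exact PTerm.noConfusion he

theorem Weak.seq_inv {P R : PTerm} {α β : List ℕ} {T : PTerm}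
    (h : Weak (.seq P R) α β T) :
    ∃ Q S γ, T = .seq Q S ∧ Weak P α γ Q ∧ Weak R γ β S :=
  h.seq_inv' P R rfl

theorem Weak.tens_inv' : ∀ {X : PTerm} {α β : List ℕ} {T : PTerm}, Weak X α β T →
    ∀ P R (k l m n : ℕ), X = .tens P R → HasSort P k l → HasSort R m n →
    ∃ Q S α₁ α₂ β₁ β₂, T = .tens Q S ∧ α = α₁ ++ α₂ ∧ β = β₁ ++ β₂ ∧
      α₁.length = k ∧ β₁.length = l ∧ Weak P α₁ β₁ Q ∧ Weak R α₂ β₂ S := by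
  intro X α β T h
  induction h with
  | refl hb _ =>
    intro P R k l m n he _ _; subst he; exact False.elim hb
  | ten h1 h2 =>
    intro P R k l m n he hP hR
    injection he with e1 e2
    subst e1; subst e2
    obtain ⟨e1, e2, _⟩ := h1.sort hP
    exact ⟨_, _, _, _, _, _, rfl, rfl, rfl, e1, e2, h1, h2⟩
  | weak h1 h2 ih1 ih2 =>
    intro P R k l m n he hP hR
    obtain ⟨Q1, S1, a1, a2, b1, b2, rfl, rfl, rfl, la, lb, w1, w2⟩ :=
      ih1 P R k l m n he hP hR
    obtain ⟨_, _, hQ1⟩ := w1.sort hP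
    obtain ⟨_, _, hS1⟩ := w2.sort hR
    obtain ⟨Q2, S2, c1, c2, d1, d2, rfl, rfl, rfl, lc, ld, w3, w4⟩ :=
      ih2 Q1 S1 k l m n rfl hQ1 hS1
    refine ⟨Q2, S2, _, _, _, _, rfl,
      List.zipWith_append (by omega),
      List.zipWith_append (by omega), ?_, ?_,
      .weak w1 w3, .weak w2 w4⟩ <;> simp <;> omega
  | _ => intro P R k l m n he _ _; exact PTerm.noConfusion he

theorem Weak.tens_inv {P R : PTerm} {α β : List ℕ} {T : PTerm} {k l m n : ℕ}
    (h : Weak (.tens P R) α β T) (hP : HasSort P k l) (hR : HasSort R m n) :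
    ∃ Q S α₁ α₂ β₁ β₂, T = .tens Q S ∧ α = α₁ ++ α₂ ∧ β = β₁ ++ β₂ ∧
      α₁.length = k ∧ β₁.length = l ∧ Weak P α₁ β₁ Q ∧ Weak R α₂ β₂ S :=
  h.tens_inv' P R k l m n rfl hP hR

end PTerm

/-- Abstract interface: a transition system on Petri terms with the properties
needed for the three structural bisimilarities. -/
structure PCTS where
  tr : PTerm → List ℕ → List ℕ → PTerm → Prop
  cut : ∀ {P Q R S : PTerm} {α β γ : List ℕ},
    tr P α γ Q → tr R γ β S → tr (.seq P R) α β (.seq Q S)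
  ten : ∀ {P Q R S : PTerm} {α₁ α₂ β₁ β₂ : List ℕ},
    tr P α₁ β₁ Q → tr R α₂ β₂ S → tr (.tens P R) (α₁ ++ α₂) (β₁ ++ β₂) (.tens Q S)
  sort : ∀ {P : PTerm} {α β : List ℕ} {Q : PTerm} {k l : ℕ},
    tr P α β Q → PTerm.HasSort P k l → α.length = k ∧ β.length = l ∧ PTerm.HasSort Q k l
  seq_inv : ∀ {P R : PTerm} {α β : List ℕ} {T : PTerm}, tr (.seq P R) α β T →
    ∃ Q S γ, T = .seq Q S ∧ tr P α γ Q ∧ tr R γ β S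
  tens_inv : ∀ {P R : PTerm} {α β : List ℕ} {T : PTerm} {k l m n : ℕ},
    tr (.tens P R) α β T → PTerm.HasSort P k l → PTerm.HasSort R m n →
    ∃ Q S α₁ α₂ β₁ β₂, T = .tens Q S ∧ α = α₁ ++ α₂ ∧ β = β₁ ++ β₂ ∧
      α₁.length = k ∧ β₁.length = l ∧ tr P α₁ β₁ Q ∧ tr R α₂ β₂ S

namespace PCTS

def ptr (T : PCTS) : PTerm → List ℕ × List ℕ → PTerm → Prop :=
  fun P a Q => T.tr P a.1 a.2 Q

theorem assoc_seq (T : PCTS) (P Q R : PTerm) :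
    Bisimilar T.ptr (.seq (.seq P Q) R) (.seq P (.seq Q R)) := by
  refine ⟨fun X Y => ∃ A B C, X = .seq (.seq A B) C ∧ Y = .seq A (.seq B C), ?_,
    ⟨P, Q, R, rfl, rfl⟩⟩
  rintro X Y ⟨A, B, C, rfl, rfl⟩
  constructor
  · rintro ⟨α, β⟩ X' h
    obtain ⟨T1, C', γ, rfl, h1, h2⟩ := T.seq_inv h
    obtain ⟨A', B', δ, rfl, h3, h4⟩ := T.seq_inv h1
    exact ⟨.seq A' (.seq B' C'), T.cut h3 (T.cut h4 h2), A', B', C', rfl, rfl⟩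
  · rintro ⟨α, β⟩ Y' h
    obtain ⟨A', T2, γ, rfl, h1, h2⟩ := T.seq_inv h
    obtain ⟨B', C', δ, rfl, h3, h4⟩ := T.seq_inv h2
    exact ⟨.seq (.seq A' B') C', T.cut (T.cut h1 h3) h4, A', B', C', rfl, rfl⟩

theorem assoc_tens (T : PCTS) (P Q R : PTerm) {k l m n t u : ℕ}
    (hP : PTerm.HasSort P k l) (hQ : PTerm.HasSort Q m n) (hR : PTerm.HasSort R t u) :
    Bisimilar T.ptr (.tens (.tens P Q) R) (.tens P (.tens Q R)) := by
  refine ⟨fun X Y => ∃ A B C k l m n t u, X = .tens (.tens A B) C ∧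
      Y = .tens A (.tens B C) ∧ PTerm.HasSort A k l ∧ PTerm.HasSort B m n ∧
      PTerm.HasSort C t u, ?_,
    ⟨P, Q, R, k, l, m, n, t, u, rfl, rfl, hP, hQ, hR⟩⟩
  rintro X Y ⟨A, B, C, k, l, m, n, t, u, rfl, rfl, hA, hB, hC⟩
  constructor
  · rintro ⟨α, β⟩ X' h
    obtain ⟨T1, C', α₁, α₂, β₁, β₂, rfl, rfl, rfl, _, _, h1, h2⟩ :=
      T.tens_inv h (hA.tens hB) hC
    obtain ⟨A', B', a1, a2, b1, b2, rfl, rfl, rfl, _, _, h3, h4⟩ :=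
      T.tens_inv h1 hA hB
    refine ⟨.tens A' (.tens B' C'), ?_,
      A', B', C', k, l, m, n, t, u, rfl, rfl,
      (T.sort h3 hA).2.2, (T.sort h4 hB).2.2, (T.sort h2 hC).2.2⟩
    show T.tr _ ((a1 ++ a2) ++ α₂) ((b1 ++ b2) ++ β₂) _
    rw [List.append_assoc, List.append_assoc]
    exact T.ten h3 (T.ten h4 h2)
  · rintro ⟨α, β⟩ Y' h
    obtain ⟨A', T2, α₁, α₂, β₁, β₂, rfl, rfl, rfl, _, _, h1, h2⟩ :=
      T.tens_inv h hA (hB.tens hC)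
    obtain ⟨B', C', a1, a2, b1, b2, rfl, rfl, rfl, _, _, h3, h4⟩ :=
      T.tens_inv h2 hB hC
    refine ⟨.tens (.tens A' B') C', ?_,
      A', B', C', k, l, m, n, t, u, rfl, rfl,
      (T.sort h1 hA).2.2, (T.sort h3 hB).2.2, (T.sort h4 hC).2.2⟩
    show T.tr _ (α₁ ++ (a1 ++ a2)) (β₁ ++ (b1 ++ b2)) _
    rw [← List.append_assoc, ← List.append_assoc]
    exact T.ten (T.ten h1 h3) h4

theorem exchange (T : PCTS) (P Q R S : PTerm) {k l m n t u : ℕ}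
    (hP : PTerm.HasSort P k l) (hQ : PTerm.HasSort Q l m)
    (hR : PTerm.HasSort R n t) (hS : PTerm.HasSort S t u) :
    Bisimilar T.ptr (.tens (.seq P Q) (.seq R S)) (.seq (.tens P R) (.tens Q S)) := by
  refine ⟨fun X Y => ∃ A B C D k l m n t u, X = .tens (.seq A B) (.seq C D) ∧
      Y = .seq (.tens A C) (.tens B D) ∧ PTerm.HasSort A k l ∧ PTerm.HasSort B l m ∧
      PTerm.HasSort C n t ∧ PTerm.HasSort D t u, ?_,
    ⟨P, Q, R, S, k, l, m, n, t, u, rfl, rfl, hP, hQ, hR, hS⟩⟩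
  rintro X Y ⟨A, B, C, D, k, l, m, n, t, u, rfl, rfl, hA, hB, hC, hD⟩
  constructor
  · rintro ⟨α, β⟩ X' h
    obtain ⟨T1, T2, α₁, α₂, β₁, β₂, rfl, rfl, rfl, _, _, h1, h2⟩ :=
      T.tens_inv h (hA.seq hB) (hC.seq hD)
    obtain ⟨A', B', γ₁, rfl, h3, h4⟩ := T.seq_inv h1
    obtain ⟨C', D', γ₂, rfl, h5, h6⟩ := T.seq_inv h2
    exact ⟨.seq (.tens A' C') (.tens B' D'), T.cut (T.ten h3 h5) (T.ten h4 h6),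
      A', B', C', D', k, l, m, n, t, u, rfl, rfl,
      (T.sort h3 hA).2.2, (T.sort h4 hB).2.2, (T.sort h5 hC).2.2, (T.sort h6 hD).2.2⟩
  · rintro ⟨α, β⟩ Y' h
    obtain ⟨T1, T2, γ, rfl, h1, h2⟩ := T.seq_inv h
    obtain ⟨A', C', a1, a2, g1, g2, rfl, rfl, rfl, _, e1, h3, h4⟩ :=
      T.tens_inv h1 hA hC
    obtain ⟨B', D', h1', h2', b1, b2, rfl, eγ, rfl, e2, _, h5, h6⟩ :=
      T.tens_inv h2 hB hD
    obtain ⟨eg1, eg2⟩ := List.append_inj eγ (by omega)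
    subst eg1; subst eg2
    exact ⟨.tens (.seq A' B') (.seq C' D'), T.ten (T.cut h3 h5) (T.cut h4 h6),
      A', B', C', D', k, l, m, n, t, u, rfl, rfl,
      (T.sort h3 hA).2.2, (T.sort h5 hB).2.2, (T.sort h4 hC).2.2, (T.sort h6 hD).2.2⟩

end PCTS

def strongTS : PCTS where
  tr := PTerm.Step
  cut := PTerm.Step.cut
  ten := PTerm.Step.ten
  sort := fun h hs => PTerm.Step.sort h hs
  seq_inv := PTerm.Step.seq_inv
  tens_inv := PTerm.Step.tens_inv

def weakTS : PCTS where
  tr := PTerm.Weak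
  cut := PTerm.Weak.cut
  ten := PTerm.Weak.ten
  sort := fun h hs => PTerm.Weak.sort h hs
  seq_inv := PTerm.Weak.seq_inv
  tens_inv := PTerm.Weak.tens_inv


theorem strongTS_bisim {P Q : PTerm} (h : Bisimilar strongTS.ptr P Q) : SBisim P Q := h

theorem weakTS_bisim {P Q : PTerm} (h : Bisimilar weakTS.ptr P Q) : WBisim P Q := h

/-- Lemma `syntaxBisimilarities`: associativity of `;` and
`⊗` and the exchange law, up to strong and weak bisimilarity of Petri
calculus terms. -/
theorem stmt11 :
    -- (i) associativity of ;
    (∀ (P Q R : PTerm) (k l m n : ℕ),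
       PTerm.HasSort P k l → PTerm.HasSort Q l m → PTerm.HasSort R m n →
       SBisim (.seq (.seq P Q) R) (.seq P (.seq Q R)) ∧
       WBisim (.seq (.seq P Q) R) (.seq P (.seq Q R))) ∧
    -- (ii) associativity of ⊗
    (∀ (P Q R : PTerm) (k l m n t u : ℕ),
       PTerm.HasSort P k l → PTerm.HasSort Q m n → PTerm.HasSort R t u →
       SBisim (.tens (.tens P Q) R) (.tens P (.tens Q R)) ∧
       WBisim (.tens (.tens P Q) R) (.tens P (.tens Q R))) ∧
    -- (iii) exchange law
    (∀ (P Q R S : PTerm) (k l m n t u : ℕ),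
       PTerm.HasSort P k l → PTerm.HasSort Q l m →
       PTerm.HasSort R n t → PTerm.HasSort S t u →
       SBisim (.tens (.seq P Q) (.seq R S)) (.seq (.tens P R) (.tens Q S)) ∧
       WBisim (.tens (.seq P Q) (.seq R S)) (.seq (.tens P R) (.tens Q S))) := by
  
  refine ⟨?_, ?_, ?_⟩
  · intro P Q R k l m n hP hQ hR
    exact ⟨strongTS_bisim (strongTS.assoc_seq P Q R), weakTS_bisim (weakTS.assoc_seq P Q R)⟩
  · intro P Q R k l m n t u hP hQ hR
    exact ⟨strongTS_bisim (strongTS.assoc_tens P Q R hP hQ hR), weakTS_bisim (weakTS.assoc_tens P Q R hP hQ hR)⟩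
  · intro P Q R S k l m n t u hP hQ hR hS
    exact ⟨strongTS_bisim (strongTS.exchange P Q R S hP hQ hR hS), weakTS_bisim (weakTS.exchange P Q R S hP hQ hR hS)⟩
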